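/- Let (A, A*) be a Leonard pair on a (d+1)-dimensional K-vector space (d ≥ 1) and β, γ, γ*, ϱ, ϱ*, ω, η, η* scalars satisfying the Askey-Wilson relations. With θ_i the ordered eigenvalues of A, a*_i = tr(E_i A*), and θ_{−1}, θ_{d+1} defined by γ = θ_{i−1} − β·θ_i + θ_{i+1} at i = 0 and i = d, then η = a*_i·(θ_i − θ_{i−1})·(θ_i − θ_{i+1}) − γ*·θ_i² − ω·θ_i for all 0 ≤ i ≤ d, and ω = a*_i·(θ_i − θ_{i+1}) + a*_{i−1}·(θ_{i−1} − θ_{i−2}) − γ*·(θ_i + θ_{i−1}) for all 1 ≤ i ≤ d. -/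

import Mathlib

/-- A square matrix is irreducible tridiagonal: nonzero entries lie within
distance one of the diagonal, and all sub- and superdiagonal entries are nonzero. -/
def IsIrreducibleTridiagonal {K : Type*} [Field K] {n : ℕ}
    (M : Matrix (Fin n) (Fin n) K) : Prop :=
  (∀ i j : Fin n, ((i : ℕ) + 1 < j ∨ (j : ℕ) + 1 < i) → M i j = 0) ∧
  (∀ i j : Fin n, ((i : ℕ) + 1 = j ∨ (j : ℕ) + 1 = i) → M i j ≠ 0)

/-- The Askey-Wilson relations for the pair `(A, B)`. -/
def AskeyWilsonRelations {K V : Type*} [Field K] [AddCommGroup V] [Module K V]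
    (A B : Module.End K V) (β γ γs ϱ ϱs ω η ηs : K) : Prop :=
  (A ^ 2 * B - β • (A * B * A) + B * A ^ 2 - γ • (A * B + B * A) - ϱ • B =
    γs • A ^ 2 + ω • A + η • 1) ∧
  (B ^ 2 * A - β • (B * A * B) + A * B ^ 2 - γs • (B * A + A * B) - ϱs • A =
    γ • B ^ 2 + ω • B + ηs • 1)

lemma aux_sum_two {K : Type*} [Field K] {n : ℕ} (f : Fin n → K) (p q : Fin n)
    (hpq : p ≠ q) (h : ∀ k, k ≠ p → k ≠ q → f k = 0) :
    ∑ k, f k = f p + f q := by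
  classical
  have hs : ∑ k ∈ ({p, q} : Finset (Fin n)), f k = ∑ k, f k := by
    refine Finset.sum_subset (Finset.subset_univ _) ?_
    intro x _ hx
    simp only [Finset.mem_insert, Finset.mem_singleton, not_or] at hx
    exact h x hx.1 hx.2
  rw [← hs, Finset.sum_pair hpq]

lemma aux_tridiag_ker {K : Type*} [Field K] {n : ℕ}
    (N : Matrix (Fin (n + 1)) (Fin (n + 1)) K) (hN : IsIrreducibleTridiagonal N)
    (θ : K) (x : Fin (n + 1) → K) (hx : N.mulVec x = θ • x)
    (h0 : x ⟨0, Nat.succ_pos n⟩ = 0) :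
    ∀ m : ℕ, (hm : m ≤ n) → x ⟨m, Nat.lt_succ_of_le hm⟩ = 0 := by
  intro m
  induction m using Nat.strong_induction_on with
  | _ m IH =>
    intro hm
    match m, hm with
    | 0, hm => exact h0
    | (l + 1), hm =>
      have hl : l ≤ n := by omega
      have row := congrFun hx ⟨l, by omega⟩
      simp only [Matrix.mulVec, dotProduct, Pi.smul_apply, smul_eq_mul] at row
      have hsum : ∑ j, N ⟨l, by omega⟩ j * x j
          = N ⟨l, by omega⟩ ⟨l + 1, by omega⟩ * x ⟨l + 1, by omega⟩ := by
        refine Finset.sum_eq_single _ ?_ (fun h => absurd (Finset.mem_univ _) h)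
        intro j _ hj
        have hjv : (j : ℕ) ≠ l + 1 := fun h => hj (Fin.ext h)
        rcases lt_or_gt_of_ne hjv with hlt | hgt
        · have : x j = 0 := by
            have := IH j.1 (by omega) (by omega)
            simpa using this
          exact mul_eq_zero_of_right _ this
        · have : N ⟨l, by omega⟩ j = 0 := hN.1 _ _ (Or.inl (by simpa using hgt))
          exact mul_eq_zero_of_left this _
      have hxl : x ⟨l, by omega⟩ = 0 := IH l (by omega) hl
      rw [hsum, hxl, mul_zero] at row
      have hne : N ⟨l, by omega⟩ ⟨l + 1, by omega⟩ ≠ 0 := hN.2 _ _ (Or.inl rfl)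
      exact (mul_eq_zero.mp row).resolve_left hne

theorem stmt_17 {K V : Type*} [Field K] [AddCommGroup V] [Module K V]
    (d : ℕ) (hd1 : 1 ≤ d) (A B : Module.End K V)
    (c : Module.Basis (Fin (d + 1)) K V)
    (hBtri : IsIrreducibleTridiagonal (LinearMap.toMatrix c c B))
    (hAdiag : (LinearMap.toMatrix c c A).IsDiag)
    (hLP : ∃ b : Module.Basis (Fin (d + 1)) K V,
      IsIrreducibleTridiagonal (LinearMap.toMatrix b b A) ∧
      (LinearMap.toMatrix b b B).IsDiag)
    (E : Fin (d + 1) → Module.End K V)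
    (hE : ∀ i, E i = Matrix.toLin c c (Matrix.single i i 1))
    (as : Fin (d + 1) → K)
    (has : ∀ i, as i = LinearMap.trace K V (E i * B))
    (β γ γs ϱ ϱs ω η ηs : K)
    (hrel : AskeyWilsonRelations A B β γ γs ϱ ϱs ω η ηs)
    (Θ : ℤ → K)
    (hΘ : ∀ i : ℕ, (h : i ≤ d) →
      Θ i = LinearMap.toMatrix c c A ⟨i, by omega⟩ ⟨i, by omega⟩)
    (hlow : Θ (-1) - β * Θ 0 + Θ 1 = γ)
    (hhigh : Θ ((d : ℤ) - 1) - β * Θ d + Θ ((d : ℤ) + 1) = γ) :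
    (∀ i : ℕ, (h : i ≤ d) →
      η = as ⟨i, by omega⟩ * (Θ i - Θ ((i : ℤ) - 1)) * (Θ i - Θ ((i : ℤ) + 1)) -
        γs * Θ i ^ 2 - ω * Θ i) ∧
    (∀ i : ℕ, (h1 : 1 ≤ i) → (h2 : i ≤ d) →
      ω = as ⟨i, by omega⟩ * (Θ i - Θ ((i : ℤ) + 1)) +
        as ⟨i - 1, by omega⟩ * (Θ ((i : ℤ) - 1) - Θ ((i : ℤ) - 2)) -
        γs * (Θ i + Θ ((i : ℤ) - 1))) := by
  classical
  obtain ⟨hrel1, hrel2⟩ := hrel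
  obtain ⟨hM0, hMne⟩ := hBtri
  set M : Matrix (Fin (d + 1)) (Fin (d + 1)) K := LinearMap.toMatrix c c B with hMdef
  set θf : Fin (d + 1) → K := fun i => LinearMap.toMatrix c c A i i with hθfdef
  have hD0 : ∀ i j, i ≠ j → LinearMap.toMatrix c c A i j = 0 := fun i j h => hAdiag h
  have hDdiag : LinearMap.toMatrix c c A = Matrix.diagonal θf := by
    ext i j
    by_cases h : i = j
    · subst h; simp [Matrix.diagonal_apply_eq, hθfdef]
    · rw [Matrix.diagonal_apply_ne _ h]; exact hD0 i j h
  -- matrix form of the relations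
  have m1 : Matrix.diagonal (fun i => θf i * θf i) * M
      - β • (Matrix.diagonal θf * M * Matrix.diagonal θf)
      + M * Matrix.diagonal (fun i => θf i * θf i)
      - γ • (Matrix.diagonal θf * M + M * Matrix.diagonal θf) - ϱ • M
      = γs • Matrix.diagonal (fun i => θf i * θf i) + ω • Matrix.diagonal θf + η • 1 := by
    rw [pow_two] at hrel1
    have h := congrArg (LinearMap.toMatrix c c) hrel1
    simp only [map_add, map_sub, map_smul, LinearMap.toMatrix_mul,
      LinearMap.toMatrix_one, ← hMdef, hDdiag, Matrix.diagonal_mul_diagonal] at h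
    exact h
  have m2 : M * M * Matrix.diagonal θf - β • (M * Matrix.diagonal θf * M)
      + Matrix.diagonal θf * (M * M)
      - γs • (M * Matrix.diagonal θf + Matrix.diagonal θf * M) - ϱs • Matrix.diagonal θf
      = γ • (M * M) + ω • M + ηs • 1 := by
    rw [pow_two] at hrel2
    have h := congrArg (LinearMap.toMatrix c c) hrel2
    simp only [map_add, map_sub, map_smul, LinearMap.toMatrix_mul,
      LinearMap.toMatrix_one, ← hMdef, hDdiag] at h
    exact h
  -- diagonal entries of relation 1
  have diag1 : ∀ i : Fin (d + 1),
      (2 - β) * θf i ^ 2 * M i i - 2 * γ * θf i * M i i - ϱ * M i i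
        = γs * θf i ^ 2 + ω * θf i + η := by
    intro i
    have h := congrFun (congrFun m1 i) i
    simp only [Matrix.sub_apply, Matrix.add_apply, Matrix.smul_apply, smul_eq_mul,
      Matrix.diagonal_mul, Matrix.mul_diagonal, Matrix.diagonal_apply_eq,
      Matrix.one_apply_eq] at h
    linear_combination h
  -- superdiagonal entries of relation 1 give the value of ϱ
  have rho : ∀ p q : Fin (d + 1), (q : ℕ) = (p : ℕ) + 1 →
      ϱ = θf p ^ 2 - β * θf p * θf q + θf q ^ 2 - γ * (θf p + θf q) := by
    intro p q hq
    have hpq : p ≠ q := by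
      intro h; rw [h] at hq; omega
    have h := congrFun (congrFun m1 p) q
    simp only [Matrix.sub_apply, Matrix.add_apply, Matrix.smul_apply, smul_eq_mul,
      Matrix.diagonal_mul, Matrix.mul_diagonal, Matrix.diagonal_apply_ne _ hpq,
      Matrix.one_apply_ne hpq, mul_zero, add_zero, zero_add] at h
    have hfac : (θf p ^ 2 - β * θf p * θf q + θf q ^ 2 - γ * (θf p + θf q) - ϱ) * M p q
        = 0 := by linear_combination h
    have hne := hMne p q (Or.inl hq.symm)
    have := (mul_eq_zero.mp hfac).resolve_right hne
    linear_combination -this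
  -- superdiagonal entries of relation 2 give an expression for ω
  have omg : ∀ p q : Fin (d + 1), (q : ℕ) = (p : ℕ) + 1 →
      ω = M q q * (θf p + θf q - β * θf q - γ) + M p p * (θf p + θf q - β * θf p - γ)
        - γs * (θf p + θf q) := by
    intro p q hq
    have hpq : p ≠ q := by
      intro h; rw [h] at hq; omega
    have hzero : ∀ k : Fin (d + 1), k ≠ p → k ≠ q → M p k * M k q = 0 := by
      intro k hkp hkq
      have hkp' : (k : ℕ) ≠ (p : ℕ) := fun h => hkp (Fin.ext h)
      have hkq' : (k : ℕ) ≠ (q : ℕ) := fun h => hkq (Fin.ext h)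
      rcases lt_or_gt_of_ne hkq' with hlt | hgt
      · exact mul_eq_zero_of_right _ (hM0 k q (Or.inl (by omega)))
      · exact mul_eq_zero_of_left (hM0 p k (Or.inl (by omega))) _
    have hMM : (M * M) p q = M p p * M p q + M p q * M q q := by
      rw [Matrix.mul_apply]
      exact aux_sum_two _ p q hpq hzero
    have hMDM : (M * Matrix.diagonal θf * M) p q
        = M p p * θf p * M p q + M p q * θf q * M q q := by
      rw [Matrix.mul_apply]
      simp only [Matrix.mul_diagonal]
      refine (aux_sum_two (fun k => M p k * θf k * M k q) p q hpq ?_).trans rfl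
      intro k hkp hkq
      rcases mul_eq_zero.mp (hzero k hkp hkq) with h | h
      · simp [h]
      · simp [h]
    have h := congrFun (congrFun m2 p) q
    simp only [Matrix.sub_apply, Matrix.add_apply, Matrix.smul_apply, smul_eq_mul,
      Matrix.diagonal_mul, Matrix.mul_diagonal, Matrix.diagonal_apply_ne _ hpq,
      Matrix.one_apply_ne hpq, mul_zero, add_zero, zero_add, sub_zero] at h
    rw [hMDM] at h
    rw [hMM] at h
    have hfac : (M q q * (θf p + θf q - β * θf q - γ)
        + M p p * (θf p + θf q - β * θf p - γ) - γs * (θf p + θf q) - ω) * M p q = 0 := by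
      linear_combination h
    have hne := hMne p q (Or.inl hq.symm)
    have := (mul_eq_zero.mp hfac).resolve_right hne
    linear_combination -this
  -- a*_i = M i i
  have has' : ∀ i, as i = M i i := by
    intro i
    rw [has, hE, LinearMap.trace_eq_matrix_trace K c, LinearMap.toMatrix_mul,
      LinearMap.toMatrix_toLin]
    simp [Matrix.trace, Matrix.diag, Matrix.mul_apply, Matrix.single, ite_and, hMdef]
  -- distinctness of the diagonal entries of A
  obtain ⟨b, hAtri, hBdiag⟩ := hLP
  have eigzero : ∀ (θ : K) (v : V), A v = θ • v →
      b.repr v ⟨0, Nat.succ_pos d⟩ = 0 → v = 0 := by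
    intro θ v hv h0
    have hx : (LinearMap.toMatrix b b A).mulVec (b.repr v) = θ • ⇑(b.repr v) := by
      rw [LinearMap.toMatrix_mulVec_repr, hv, map_smul]
      rfl
    have hz := aux_tridiag_ker (LinearMap.toMatrix b b A) hAtri θ _ hx h0
    have hrz : b.repr v = 0 := by
      ext j
      have := hz j.1 (by omega)
      simpa using this
    exact (LinearEquiv.map_eq_zero_iff _).mp hrz
  have eigc : ∀ p : Fin (d + 1), A (c p) = θf p • c p := by
    intro p
    apply c.repr.injective
    rw [map_smul]
    ext j
    have h1 : c.repr (A (c p)) j = LinearMap.toMatrix c c A j p :=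
      (LinearMap.toMatrix_apply c c A j p).symm
    rw [h1, Finsupp.smul_apply, Module.Basis.repr_self, smul_eq_mul, Finsupp.single_apply]
    by_cases hj : p = j
    · subst hj; simp [hθfdef]
    · rw [if_neg hj, mul_zero]
      exact hD0 j p (fun h => hj h.symm)
  have hdist : ∀ p q : Fin (d + 1), p ≠ q → θf p ≠ θf q := by
    intro p q hpq heq
    set rp := b.repr (c p) ⟨0, Nat.succ_pos d⟩ with hrp
    set rq := b.repr (c q) ⟨0, Nat.succ_pos d⟩ with hrq
    have hw : A (rq • c p - rp • c q) = θf p • (rq • c p - rp • c q) := by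
      rw [map_sub, map_smul, map_smul, eigc p, eigc q, ← heq, smul_sub,
        smul_comm rq, smul_comm rp]
    have h0 : b.repr (rq • c p - rp • c q) ⟨0, Nat.succ_pos d⟩ = 0 := by
      rw [map_sub, map_smul, map_smul]
      simp only [Finsupp.coe_sub, Finsupp.coe_smul, Pi.sub_apply, Pi.smul_apply,
        smul_eq_mul, ← hrp, ← hrq]
      ring
    have hv0 := eigzero _ _ hw h0
    have hcoef := congrArg (fun v => c.repr v) hv0
    simp only [map_sub, map_smul, Module.Basis.repr_self, map_zero] at hcoef
    have hrq0 : rq = 0 := by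
      have := congrFun (congrArg (fun f : (Fin (d+1)) →₀ K => (f : Fin (d+1) → K)) hcoef) p
      simpa [Finsupp.single_apply, hpq, Ne.symm hpq] using this
    have hrp0 : rp = 0 := by
      have := congrFun (congrArg (fun f : (Fin (d+1)) →₀ K => (f : Fin (d+1) → K)) hcoef) q
      simpa [Finsupp.single_apply, hpq, Ne.symm hpq] using this
    have := eigzero (θf p) (c p) (eigc p) hrp0
    exact c.ne_zero p this
  -- values of Θ in range
  have hTn : ∀ i : ℕ, (h : i ≤ d) → Θ i = θf ⟨i, by omega⟩ := fun i h => hΘ i h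
  -- the three-term recurrence for all 0 ≤ i ≤ d
  have hrec : ∀ i : ℕ, (h : i ≤ d) →
      Θ ((i : ℤ) - 1) - β * Θ i + Θ ((i : ℤ) + 1) = γ := by
    intro i h
    rcases Nat.eq_zero_or_pos i with h0 | h1
    · subst h0
      simpa using hlow
    · rcases eq_or_lt_of_le h with hid | hlt
      · subst hid
        simpa using hhigh
      · have e1 := rho ⟨i - 1, by omega⟩ ⟨i, by omega⟩ (by simp; omega)
        have e2 := rho ⟨i, by omega⟩ ⟨i + 1, by omega⟩ (by simp)
        have hne : θf ⟨i - 1, by omega⟩ - θf ⟨i + 1, by omega⟩ ≠ 0 := by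
          refine sub_ne_zero.mpr (hdist _ _ ?_)
          simp only [ne_eq, Fin.mk.injEq]
          omega
        have hfac : (θf ⟨i - 1, by omega⟩ - θf ⟨i + 1, by omega⟩) *
            (θf ⟨i - 1, by omega⟩ + θf ⟨i + 1, by omega⟩ - β * θf ⟨i, by omega⟩ - γ) = 0 := by
          linear_combination e2 - e1
        have hsum := (mul_eq_zero.mp hfac).resolve_left hne
        have c1 : ((i : ℤ) - 1) = ((i - 1 : ℕ) : ℤ) := by omega
        have c2 : ((i : ℤ) + 1) = ((i + 1 : ℕ) : ℤ) := by omega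
        rw [c1, c2, hTn (i - 1) (by omega), hTn (i + 1) (by omega), hTn i h]
        linear_combination hsum
  refine ⟨?_, ?_⟩
  · -- the η identity
    intro i h
    have e0 := diag1 ⟨i, by omega⟩
    rw [has', hTn i h]
    rcases eq_or_lt_of_le h with hid | hlt
    · -- i = d : use ϱ at (i-1, i)
      have hi1 : 1 ≤ i := by omega
      have e2 := rho ⟨i - 1, by omega⟩ ⟨i, by omega⟩ (by simp; omega)
      have H := hrec i h
      have c1 : ((i : ℤ) - 1) = ((i - 1 : ℕ) : ℤ) := by omega
      rw [hTn i h, c1, hTn (i - 1) (by omega)] at H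
      rw [c1, hTn (i - 1) (by omega)]
      linear_combination (-1 : K) * e0 + M ⟨i, by omega⟩ ⟨i, by omega⟩ *
        ((θf ⟨i, by omega⟩ - θf ⟨i - 1, by omega⟩) * H - e2)
    · -- i < d : use ϱ at (i, i+1)
      have e2 := rho ⟨i, by omega⟩ ⟨i + 1, by omega⟩ (by simp)
      have H := hrec i h
      have c2 : ((i : ℤ) + 1) = ((i + 1 : ℕ) : ℤ) := by omega
      rw [hTn i h, c2, hTn (i + 1) (by omega)] at H
      rw [c2, hTn (i + 1) (by omega)]
      linear_combination (-1 : K) * e0 + M ⟨i, by omega⟩ ⟨i, by omega⟩ *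
        ((θf ⟨i, by omega⟩ - θf ⟨i + 1, by omega⟩) * H - e2)
  · -- the ω identity
    intro i h1 h2
    have om := omg ⟨i - 1, by omega⟩ ⟨i, by omega⟩ (by simp; omega)
    have H1 := hrec i h2
    have H0 := hrec (i - 1) (by omega)
    have c1 : ((i : ℤ) - 1) = ((i - 1 : ℕ) : ℤ) := by omega
    have c0a : ((i - 1 : ℕ) : ℤ) - 1 = ((i : ℤ) - 2) := by omega
    have c0b : ((i - 1 : ℕ) : ℤ) + 1 = ((i : ℕ) : ℤ) := by omega
    rw [hTn i h2, c1, hTn (i - 1) (by omega)] at H1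
    rw [c0a, c0b, hTn (i - 1) (by omega), hTn i h2] at H0
    rw [has', has', hTn i h2, c1, hTn (i - 1) (by omega)]
    linear_combination om + M ⟨i, by omega⟩ ⟨i, by omega⟩ * H1 +
      M ⟨i - 1, by omega⟩ ⟨i - 1, by omega⟩ * H0
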